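/- Let {e_k} be a Riesz basis for a Hilbert space H, {m_k} nonzero complex scalars, and f_k = m_k e_k. Let T be the linear operator on span{f_k} with T f_k = f_{k+1}. Then T is bounded if and only if the sequence ‖f_{k+1}‖/‖f_k‖ (equivalently |m_{k+1}|/|m_k|) is bounded. -/

import Mathlib

open Filter Finset Topology

/-- Let `{e k}` be a Riesz basis (bounds `A, B` and dense span), `m k` nonzero scalars,
`f k = m k • e k`, and `T` the operator with `T f_k = f_{k+1}`. Then `T` is bounded on
`span {f k}` iff the ratios `‖f (k+1)‖ / ‖f k‖` are bounded. -/
theorem stmt_8 {H : Type*} [NormedAddCommGroup H] [InnerProductSpace ℂ H]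
    [CompleteSpace H] [TopologicalSpace.SeparableSpace H]
    (e : ℕ → H) (A B : ℝ) (hA : 0 < A) (hB : 0 < B)
    (hRiesz : ∀ (s : Finset ℕ) (c : ℕ → ℂ),
      A * ∑ k ∈ s, ‖c k‖ ^ 2 ≤ ‖∑ k ∈ s, c k • e k‖ ^ 2 ∧
      ‖∑ k ∈ s, c k • e k‖ ^ 2 ≤ B * ∑ k ∈ s, ‖c k‖ ^ 2)
    (hdense : (Submodule.span ℂ (Set.range e)).topologicalClosure = ⊤)
    (m : ℕ → ℂ) (hm : ∀ k, m k ≠ 0) (f : ℕ → H) (hf : ∀ k, f k = m k • e k)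
    (T : H →ₗ[ℂ] H) (hT : ∀ k, T (f k) = f (k + 1)) :
    (∃ C : ℝ, ∀ x ∈ Submodule.span ℂ (Set.range f), ‖T x‖ ≤ C * ‖x‖) ↔
      (∃ M : ℝ, ∀ k, ‖f (k + 1)‖ / ‖f k‖ ≤ M) := by
  have he2 : ∀ k, A ≤ ‖e k‖ ^ 2 ∧ ‖e k‖ ^ 2 ≤ B := by
    intro k
    have h := hRiesz {k} (fun _ => 1)
    simpa using h
  have hfnorm : ∀ k, ‖f k‖ = ‖m k‖ * ‖e k‖ := by
    intro k; rw [hf, norm_smul]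
  have hfpos : ∀ k, 0 < ‖f k‖ := by
    intro k
    rw [hfnorm]
    have hek : 0 < ‖e k‖ := by
      have := (he2 k).1; nlinarith [norm_nonneg (e k)]
    have hmk : 0 < ‖m k‖ := norm_pos_iff.2 (hm k)
    positivity
  constructor
  · rintro ⟨C, hC⟩
    refine ⟨C, fun k => ?_⟩
    have hk : f k ∈ Submodule.span ℂ (Set.range f) :=
      Submodule.subset_span ⟨k, rfl⟩
    have h := hC (f k) hk
    rw [hT] at h
    exact (div_le_iff₀ (hfpos k)).2 h
  · rintro ⟨M, hM⟩
    have hM0 : 0 ≤ M :=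
      le_trans (div_nonneg (norm_nonneg _) (norm_nonneg _)) (hM 0)
    -- pointwise scalar bound
    have hmb : ∀ k, ‖m (k + 1)‖ ^ 2 ≤ M ^ 2 * B / A * ‖m k‖ ^ 2 := by
      intro k
      have h1 : ‖f (k + 1)‖ ≤ M * ‖f k‖ := (div_le_iff₀ (hfpos k)).1 (hM k)
      have h2 : ‖f (k + 1)‖ ^ 2 ≤ M ^ 2 * ‖f k‖ ^ 2 := by
        nlinarith [norm_nonneg (f (k + 1)), norm_nonneg (f k), hfpos k]
      have h3 : ‖m (k + 1)‖ ^ 2 * A ≤ ‖f (k + 1)‖ ^ 2 := by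
        rw [hfnorm, mul_pow]
        have := (he2 (k + 1)).1
        nlinarith [sq_nonneg (‖m (k + 1)‖)]
      have h4 : ‖f k‖ ^ 2 ≤ ‖m k‖ ^ 2 * B := by
        rw [hfnorm, mul_pow]
        have := (he2 k).2
        nlinarith [sq_nonneg (‖m k‖)]
      rw [div_mul_eq_mul_div, le_div_iff₀ hA]
      nlinarith [sq_nonneg M, sq_nonneg (‖m k‖)]
    refine ⟨M * B / A, ?_⟩
    intro x hx
    rw [Finsupp.mem_span_range_iff_exists_finsupp] at hx
    obtain ⟨c, hc⟩ := hx
    set s := c.support with hs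
    have hx' : x = ∑ k ∈ s, (c k * m k) • e k := by
      rw [← hc, Finsupp.sum]
      refine Finset.sum_congr rfl fun k _ => ?_
      rw [hf, smul_smul]
    have hTx : T x = ∑ k ∈ s, (c k * m (k + 1)) • e (k + 1) := by
      rw [← hc, Finsupp.sum, map_sum]
      refine Finset.sum_congr rfl fun k _ => ?_
      rw [map_smul, hT, hf, smul_smul]
    set emb : ℕ ↪ ℕ := ⟨Nat.succ, Nat.succ_injective⟩ with hemb
    set d : ℕ → ℂ := fun j => if j = 0 then 0 else c (j - 1) * m j with hd
    have hTx' : T x = ∑ j ∈ s.map emb, d j • e j := by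
      rw [Finset.sum_map, hTx]
      refine Finset.sum_congr rfl fun k _ => ?_
      simp [hd, hemb]
    have hup := (hRiesz (s.map emb) d).2
    rw [← hTx'] at hup
    have hmapsum : ∑ j ∈ s.map emb, ‖d j‖ ^ 2 = ∑ k ∈ s, ‖c k * m (k + 1)‖ ^ 2 := by
      rw [Finset.sum_map]
      refine Finset.sum_congr rfl fun k _ => ?_
      simp [hd, hemb]
    rw [hmapsum] at hup
    have hlow := (hRiesz s (fun k => c k * m k)).1
    rw [← hx'] at hlow
    have hsum : ∑ k ∈ s, ‖c k * m (k + 1)‖ ^ 2 ≤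
        M ^ 2 * B / A * ∑ k ∈ s, ‖c k * m k‖ ^ 2 := by
      rw [Finset.mul_sum]
      refine Finset.sum_le_sum fun k _ => ?_
      rw [norm_mul, norm_mul, mul_pow, mul_pow]
      have := hmb k
      nlinarith [sq_nonneg (‖c k‖), sq_nonneg (‖m (k + 1)‖)]
    have hS0 : 0 ≤ ∑ k ∈ s, ‖c k * m k‖ ^ 2 :=
      Finset.sum_nonneg fun k _ => sq_nonneg _
    have hsq : ‖T x‖ ^ 2 ≤ (M * B / A * ‖x‖) ^ 2 := by
      have hx2 : A * ∑ k ∈ s, ‖c k * m k‖ ^ 2 ≤ ‖x‖ ^ 2 := hlow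
      calc ‖T x‖ ^ 2 ≤ B * ∑ k ∈ s, ‖c k * m (k + 1)‖ ^ 2 := hup
        _ ≤ B * (M ^ 2 * B / A * ∑ k ∈ s, ‖c k * m k‖ ^ 2) := by
            exact mul_le_mul_of_nonneg_left hsum hB.le
        _ = (M * B / A) ^ 2 * (A * ∑ k ∈ s, ‖c k * m k‖ ^ 2) := by
            field_simp
        _ ≤ (M * B / A) ^ 2 * ‖x‖ ^ 2 :=
            mul_le_mul_of_nonneg_left hx2 (by positivity)
        _ = (M * B / A * ‖x‖) ^ 2 := by ring
    have hC0 : 0 ≤ M * B / A * ‖x‖ := by positivity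
    nlinarith [norm_nonneg (T x), hsq, hC0]
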